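/- arXiv:1507.02782 — 2 statements merged into one kernel-verified Lean document; each statement's English description precedes it below -/
import Mathlib

section
/- Let α, β ∈ ℝ with (α,β) ≠ (0,0), and let H = {diag(e^s, e^t, e^{αs+βt}) : s,t ∈ ℝ} act on ℝ³ by matrix multiplication. Let 𝒪₂ = {v ∈ ℝ³ : the only (s,t) ∈ ℝ² with (e^s v₁, e^t v₂, e^{αs+βt} v₃) = v is (0,0)} be the set of points with trivial stabilizer. Then the following are equivalent: (i) the orbit space 𝒪₂/H is compact; (ii) 𝒪₂/H contains a compact open subset whose preimage under the quotient map 𝒪₂ → 𝒪₂/H is conull in ℝ³ for Lebesgue measure; (iii) at least one of α, β is strictly positive. -/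
open MeasureTheory Set
open scoped Real

noncomputable section

/-- The action of `(s,t) ∈ ℝ²` (i.e. of `diag(e^s, e^t, e^{αs+βt}) ∈ H`) on `ℝ³`. -/
def act (α β : ℝ) (p : ℝ × ℝ) (v : Fin 3 → ℝ) : Fin 3 → ℝ :=
  ![Real.exp p.1 * v 0, Real.exp p.2 * v 1, Real.exp (α * p.1 + β * p.2) * v 2]

/-- The set `𝒪₂` of points of `ℝ³` with trivial stabilizer under the action of `H`. -/
def freeSet (α β : ℝ) : Set (Fin 3 → ℝ) :=
  {v | ∀ p : ℝ × ℝ, act α β p v = v → p = 0}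

/-- The orbit equivalence relation on `𝒪₂`; `Quot (orbitRel α β)` is the orbit space
`𝒪₂/H` with the quotient topology. -/
def orbitRel (α β : ℝ) (x y : ↥(freeSet α β)) : Prop :=
  ∃ p : ℝ × ℝ, act α β p (x : Fin 3 → ℝ) = (y : Fin 3 → ℝ)

lemma act_apply0 (α β : ℝ) (p : ℝ × ℝ) (v : Fin 3 → ℝ) :
    act α β p v 0 = Real.exp p.1 * v 0 := rfl
lemma act_apply1 (α β : ℝ) (p : ℝ × ℝ) (v : Fin 3 → ℝ) :
    act α β p v 1 = Real.exp p.2 * v 1 := rfl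
lemma act_apply2 (α β : ℝ) (p : ℝ × ℝ) (v : Fin 3 → ℝ) :
    act α β p v 2 = Real.exp (α * p.1 + β * p.2) * v 2 := rfl

lemma act_eq_iff (α β : ℝ) (p : ℝ × ℝ) (v w : Fin 3 → ℝ) :
    act α β p v = w ↔ (Real.exp p.1 * v 0 = w 0 ∧ Real.exp p.2 * v 1 = w 1 ∧
      Real.exp (α * p.1 + β * p.2) * v 2 = w 2) := by
  constructor
  · intro h
    exact ⟨congrFun h 0, congrFun h 1, congrFun h 2⟩
  · rintro ⟨h0, h1, h2⟩
    funext i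
    fin_cases i
    · exact h0
    · exact h1
    · exact h2

lemma eq_zero_of_exp_mul {x c : ℝ} (hc : c ≠ 0) (h : Real.exp x * c = c) : x = 0 := by
  have h1 : Real.exp x = 1 := mul_right_cancel₀ hc (h.trans (one_mul c).symm)
  exact (Real.exp_eq_one_iff x).1 h1

lemma free_of_01 {α β : ℝ} {v : Fin 3 → ℝ} (h0 : v 0 ≠ 0) (h1 : v 1 ≠ 0) :
    v ∈ freeSet α β := by
  intro p hp
  rw [act_eq_iff] at hp
  exact Prod.ext (eq_zero_of_exp_mul h0 hp.1) (eq_zero_of_exp_mul h1 hp.2.1)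

lemma free_of_12 {α β : ℝ} {v : Fin 3 → ℝ} (hα : α ≠ 0) (h1 : v 1 ≠ 0) (h2 : v 2 ≠ 0) :
    v ∈ freeSet α β := by
  intro p hp
  rw [act_eq_iff] at hp
  have hp2 : p.2 = 0 := eq_zero_of_exp_mul h1 hp.2.1
  have he : α * p.1 + β * p.2 = 0 := eq_zero_of_exp_mul h2 hp.2.2
  rw [hp2] at he
  have hp1 : p.1 = 0 := by
    have h : α * p.1 = 0 := by linarith
    exact (mul_eq_zero.1 h).resolve_left hα
  exact Prod.ext hp1 hp2

lemma free_of_02 {α β : ℝ} {v : Fin 3 → ℝ} (hβ : β ≠ 0) (h0 : v 0 ≠ 0) (h2 : v 2 ≠ 0) :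
    v ∈ freeSet α β := by
  intro p hp
  rw [act_eq_iff] at hp
  have hp1 : p.1 = 0 := eq_zero_of_exp_mul h0 hp.1
  have he : α * p.1 + β * p.2 = 0 := eq_zero_of_exp_mul h2 hp.2.2
  rw [hp1] at he
  have hp2 : p.2 = 0 := by
    have h : β * p.2 = 0 := by linarith
    exact (mul_eq_zero.1 h).resolve_left hβ
  exact Prod.ext hp1 hp2

lemma exp_neg_log_abs {a : ℝ} (ha : a ≠ 0) : Real.exp (-Real.log |a|) * |a| = 1 := by
  rw [Real.exp_neg, Real.exp_log (abs_pos.2 ha)]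
  field_simp

lemma abs_exp_mul (t b : ℝ) : |Real.exp t * b| = Real.exp t * |b| := by
  rw [abs_mul, Real.abs_exp]

lemma abs_exp_neg_log {x : ℝ} (hx : x ≠ 0) :
    |Real.exp (-Real.log |x|) * x| = 1 := by
  rw [abs_exp_mul, exp_neg_log_abs hx]

lemma ne_zero_of_abs_eq_one {x : ℝ} (h : |x| = 1) : x ≠ 0 := by
  intro h0; rw [h0] at h; simp at h

lemma stab_eq {α β : ℝ} {v : Fin 3 → ℝ} (hv : v ∈ freeSet α β) {s t : ℝ}
    (h0 : Real.exp s * v 0 = v 0) (h1 : Real.exp t * v 1 = v 1)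
    (h2 : Real.exp (α * s + β * t) * v 2 = v 2) : s = 0 ∧ t = 0 := by
  have h := hv (s, t) ((act_eq_iff α β (s, t) v v).2 ⟨h0, h1, h2⟩)
  exact ⟨congrArg Prod.fst h, congrArg Prod.snd h⟩

lemma exists_compact_saturation_alpha (α β : ℝ) (hα : 0 < α) :
    ∃ K : Set (Fin 3 → ℝ), IsCompact K ∧ K ⊆ freeSet α β ∧
      ∀ v ∈ freeSet α β, ∃ p : ℝ × ℝ, act α β p v ∈ K := by
  classical
  refine ⟨({v | |v 1| = 1 ∧ |v 0| ≤ 1 ∧ |v 2| ≤ 1 ∧ (|v 0| = 1 ∨ |v 2| = 1)} ∪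
      ({v | |v 0| = 1 ∧ v 1 = 0 ∧ |v 2| = 1} ∩ {_v | β ≠ 0})), ?_, ?_, ?_⟩
  · -- compact
    have c0 : Continuous fun v : Fin 3 → ℝ => |v 0| := (continuous_apply (0 : Fin 3)).abs
    have c1 : Continuous fun v : Fin 3 → ℝ => |v 1| := (continuous_apply (1 : Fin 3)).abs
    have c2 : Continuous fun v : Fin 3 → ℝ => |v 2| := (continuous_apply (2 : Fin 3)).abs
    have hc1 : IsClosed {v : Fin 3 → ℝ | |v 1| = 1 ∧ |v 0| ≤ 1 ∧ |v 2| ≤ 1 ∧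
        (|v 0| = 1 ∨ |v 2| = 1)} :=
      (isClosed_eq c1 continuous_const).inter
        ((isClosed_le c0 continuous_const).inter
          ((isClosed_le c2 continuous_const).inter
            ((isClosed_eq c0 continuous_const).union (isClosed_eq c2 continuous_const))))
    have hc2 : IsClosed ({v : Fin 3 → ℝ | |v 0| = 1 ∧ v 1 = 0 ∧ |v 2| = 1} ∩ {_v | β ≠ 0}) := by
      by_cases hb : β = 0
      · have he : ({v : Fin 3 → ℝ | |v 0| = 1 ∧ v 1 = 0 ∧ |v 2| = 1} ∩ {_v | β ≠ 0}) = ∅ := by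
          ext v; simp [hb]
        rw [he]; exact isClosed_empty
      · have he : ({v : Fin 3 → ℝ | |v 0| = 1 ∧ v 1 = 0 ∧ |v 2| = 1} ∩ {_v | β ≠ 0}) =
            {v : Fin 3 → ℝ | |v 0| = 1 ∧ v 1 = 0 ∧ |v 2| = 1} := by
          ext v; simp [hb]
        rw [he]
        exact (isClosed_eq c0 continuous_const).inter
          ((isClosed_eq (continuous_apply (1 : Fin 3)) continuous_const).inter
            (isClosed_eq c2 continuous_const))
    refine (isCompact_univ_pi fun _ : Fin 3 =>
      isCompact_Icc (a := (-1:ℝ)) (b := (1:ℝ))).of_isClosed_subset (hc1.union hc2) ?_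
    rintro v hv i -
    have h' : |v i| ≤ 1 := by
      fin_cases i
      · rcases hv with ⟨-, h0, -, -⟩ | ⟨⟨h0, -, -⟩, -⟩
        · exact h0
        · exact h0.le
      · rcases hv with ⟨h1, -⟩ | ⟨⟨-, h1, -⟩, -⟩
        · exact h1.le
        · simp [h1]
      · rcases hv with ⟨-, -, h2, -⟩ | ⟨⟨-, -, h2⟩, -⟩
        · exact h2
        · exact h2.le
    exact mem_Icc.mpr (abs_le.mp h')
  · -- subset of freeSet
    rintro v (⟨h1, -, -, h02⟩ | ⟨⟨h0, -, h2⟩, hb⟩)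
    · rcases h02 with h0 | h2
      · exact free_of_01 (ne_zero_of_abs_eq_one h0) (ne_zero_of_abs_eq_one h1)
      · exact free_of_12 hα.ne' (ne_zero_of_abs_eq_one h1) (ne_zero_of_abs_eq_one h2)
    · exact free_of_02 hb (ne_zero_of_abs_eq_one h0) (ne_zero_of_abs_eq_one h2)
  · -- saturation
    intro v hv
    by_cases hb : v 1 = 0
    · -- orbit in the plane v₁ = 0
      have ha : v 0 ≠ 0 := by
        intro h0
        have h := (stab_eq hv (s := β) (t := -α)
          (by rw [h0, mul_zero])
          (by rw [hb, mul_zero])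
          (by rw [show α * β + β * (-α) = 0 by ring, Real.exp_zero, one_mul])).2
        exact hα.ne' (neg_eq_zero.mp h)
      have hc : v 2 ≠ 0 := by
        intro h2
        have h := (stab_eq hv (s := 0) (t := 1)
          (by rw [Real.exp_zero, one_mul])
          (by rw [hb, mul_zero])
          (by rw [h2, mul_zero])).2
        exact one_ne_zero h
      have hβ : β ≠ 0 := by
        intro hβ0
        have h := (stab_eq hv (s := 0) (t := 1)
          (by rw [Real.exp_zero, one_mul])
          (by rw [hb, mul_zero])
          (by rw [show α * 0 + β * 1 = 0 by rw [hβ0]; ring, Real.exp_zero, one_mul])).2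
        exact one_ne_zero h
      refine ⟨(-Real.log |v 0|, (-α * (-Real.log |v 0|) - Real.log |v 2|) / β),
        Or.inr ⟨⟨?_, ?_, ?_⟩, hβ⟩⟩
      · rw [act_apply0]
        exact abs_exp_neg_log ha
      · rw [act_apply1, hb, mul_zero]
      · rw [act_apply2]
        rw [show α * (-Real.log |v 0|, (-α * (-Real.log |v 0|) - Real.log |v 2|) / β).1 +
            β * (-Real.log |v 0|, (-α * (-Real.log |v 0|) - Real.log |v 2|) / β).2 =
            -Real.log |v 2| from by field_simp; ring]
        exact abs_exp_neg_log hc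
    · -- v 1 ≠ 0
      set t : ℝ := -Real.log |v 1| with ht
      have habs1 : ∀ s : ℝ, |act α β (s, t) v 1| = 1 := by
        intro s
        rw [act_apply1]
        exact abs_exp_neg_log hb
      by_cases hA : v 0 = 0
      · -- plane v₀ = 0 : need v₂ ≠ 0
        have hc : v 2 ≠ 0 := by
          intro h2
          have h := (stab_eq hv (s := 1) (t := 0)
            (by rw [hA, mul_zero])
            (by rw [Real.exp_zero, one_mul])
            (by rw [h2, mul_zero])).1
          exact one_ne_zero h
        refine ⟨((-(β * t) - Real.log |v 2|) / α, t), Or.inl ⟨habs1 _, ?_, ?_, Or.inr ?_⟩⟩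
        · rw [act_apply0, hA, mul_zero]
          simp
        · rw [act_apply2]
          rw [show α * (((-(β * t) - Real.log |v 2|) / α, t) : ℝ × ℝ).1 +
              β * (((-(β * t) - Real.log |v 2|) / α, t) : ℝ × ℝ).2 =
              -Real.log |v 2| from by field_simp; ring]
          exact (abs_exp_neg_log hc).le
        · rw [act_apply2]
          rw [show α * (((-(β * t) - Real.log |v 2|) / α, t) : ℝ × ℝ).1 +
              β * (((-(β * t) - Real.log |v 2|) / α, t) : ℝ × ℝ).2 =
              -Real.log |v 2| from by field_simp; ring]
          exact abs_exp_neg_log hc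
      · by_cases hc : v 2 = 0
        · refine ⟨(-Real.log |v 0|, t), Or.inl ⟨habs1 _, ?_, ?_, Or.inl ?_⟩⟩
          · rw [act_apply0]
            exact (abs_exp_neg_log hA).le
          · rw [act_apply2, hc, mul_zero]
            simp
          · rw [act_apply0]
            exact abs_exp_neg_log hA
        · -- generic case : all coordinates nonzero
          set u : ℝ := -Real.log |v 0| with hu
          set w : ℝ := (-(β * t) - Real.log |v 2|) / α with hw
          set s : ℝ := min u w with hs
          have key0 : Real.exp u * |v 0| = 1 := by
            rw [← abs_exp_mul]
            exact abs_exp_neg_log hA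
          have key2 : Real.exp (α * w + β * t) * |v 2| = 1 := by
            rw [show α * w + β * t = -Real.log |v 2| from by rw [hw]; field_simp; ring,
              ← abs_exp_mul]
            exact abs_exp_neg_log hc
          have h0le : |act α β (s, t) v 0| ≤ 1 := by
            rw [act_apply0, abs_exp_mul]
            calc Real.exp s * |v 0| ≤ Real.exp u * |v 0| := by
                  have := Real.exp_le_exp.2 (min_le_left u w)
                  exact mul_le_mul_of_nonneg_right this (abs_nonneg _)
              _ = 1 := key0
          have h2le : |act α β (s, t) v 2| ≤ 1 := by
            rw [act_apply2, abs_exp_mul]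
            calc Real.exp (α * s + β * t) * |v 2|
                ≤ Real.exp (α * w + β * t) * |v 2| := by
                  have hsw : α * s ≤ α * w :=
                    mul_le_mul_of_nonneg_left (min_le_right u w) hα.le
                  exact mul_le_mul_of_nonneg_right
                    (Real.exp_le_exp.2 (by linarith)) (abs_nonneg _)
              _ = 1 := key2
          refine ⟨(s, t), Or.inl ⟨habs1 _, h0le, h2le, ?_⟩⟩
          rcases min_choice u w with hmin | hmin
          · left
            rw [act_apply0, abs_exp_mul]
            rw [show ((s,t) : ℝ × ℝ).1 = u from hmin ▸ hs]
            exact key0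
          · right
            rw [act_apply2, abs_exp_mul]
            rw [show α * ((s,t) : ℝ × ℝ).1 + β * ((s,t) : ℝ × ℝ).2 = α * w + β * t from by
              rw [hs, hmin]]
            exact key2

lemma exists_compact_saturation_beta (α β : ℝ) (hβ : 0 < β) :
    ∃ K : Set (Fin 3 → ℝ), IsCompact K ∧ K ⊆ freeSet α β ∧
      ∀ v ∈ freeSet α β, ∃ p : ℝ × ℝ, act α β p v ∈ K := by
  classical
  refine ⟨({v | |v 0| = 1 ∧ |v 1| ≤ 1 ∧ |v 2| ≤ 1 ∧ (|v 1| = 1 ∨ |v 2| = 1)} ∪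
      ({v | v 0 = 0 ∧ |v 1| = 1 ∧ |v 2| = 1} ∩ {_v | α ≠ 0})), ?_, ?_, ?_⟩
  · -- compact
    have c0 : Continuous fun v : Fin 3 → ℝ => |v 0| := (continuous_apply (0 : Fin 3)).abs
    have c1 : Continuous fun v : Fin 3 → ℝ => |v 1| := (continuous_apply (1 : Fin 3)).abs
    have c2 : Continuous fun v : Fin 3 → ℝ => |v 2| := (continuous_apply (2 : Fin 3)).abs
    have hc1 : IsClosed {v : Fin 3 → ℝ | |v 0| = 1 ∧ |v 1| ≤ 1 ∧ |v 2| ≤ 1 ∧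
        (|v 1| = 1 ∨ |v 2| = 1)} :=
      (isClosed_eq c0 continuous_const).inter
        ((isClosed_le c1 continuous_const).inter
          ((isClosed_le c2 continuous_const).inter
            ((isClosed_eq c1 continuous_const).union (isClosed_eq c2 continuous_const))))
    have hc2 : IsClosed ({v : Fin 3 → ℝ | v 0 = 0 ∧ |v 1| = 1 ∧ |v 2| = 1} ∩ {_v | α ≠ 0}) := by
      by_cases hb : α = 0
      · have he : ({v : Fin 3 → ℝ | v 0 = 0 ∧ |v 1| = 1 ∧ |v 2| = 1} ∩ {_v | α ≠ 0}) = ∅ := by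
          ext v; simp [hb]
        rw [he]; exact isClosed_empty
      · have he : ({v : Fin 3 → ℝ | v 0 = 0 ∧ |v 1| = 1 ∧ |v 2| = 1} ∩ {_v | α ≠ 0}) =
            {v : Fin 3 → ℝ | v 0 = 0 ∧ |v 1| = 1 ∧ |v 2| = 1} := by
          ext v; simp [hb]
        rw [he]
        exact (isClosed_eq (continuous_apply (0 : Fin 3)) continuous_const).inter
          ((isClosed_eq c1 continuous_const).inter (isClosed_eq c2 continuous_const))
    refine (isCompact_univ_pi fun _ : Fin 3 =>
      isCompact_Icc (a := (-1:ℝ)) (b := (1:ℝ))).of_isClosed_subset (hc1.union hc2) ?_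
    rintro v hv i -
    have h' : |v i| ≤ 1 := by
      fin_cases i
      · rcases hv with ⟨h0, -⟩ | ⟨⟨h0, -, -⟩, -⟩
        · exact h0.le
        · simp [h0]
      · rcases hv with ⟨-, h1, -, -⟩ | ⟨⟨-, h1, -⟩, -⟩
        · exact h1
        · exact h1.le
      · rcases hv with ⟨-, -, h2, -⟩ | ⟨⟨-, -, h2⟩, -⟩
        · exact h2
        · exact h2.le
    exact mem_Icc.mpr (abs_le.mp h')
  · -- subset of freeSet
    rintro v (⟨h0, -, -, h12⟩ | ⟨⟨-, h1, h2⟩, hA⟩)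
    · rcases h12 with h1 | h2
      · exact free_of_01 (ne_zero_of_abs_eq_one h0) (ne_zero_of_abs_eq_one h1)
      · exact free_of_02 hβ.ne' (ne_zero_of_abs_eq_one h0) (ne_zero_of_abs_eq_one h2)
    · exact free_of_12 hA (ne_zero_of_abs_eq_one h1) (ne_zero_of_abs_eq_one h2)
  · -- saturation
    intro v hv
    by_cases ha : v 0 = 0
    · -- orbit in the plane v₀ = 0
      have hB : v 1 ≠ 0 := by
        intro h1
        have h := (stab_eq hv (s := β) (t := -α)
          (by rw [ha, mul_zero])
          (by rw [h1, mul_zero])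
          (by rw [show α * β + β * (-α) = 0 by ring, Real.exp_zero, one_mul])).1
        exact hβ.ne' h
      have hc : v 2 ≠ 0 := by
        intro h2
        have h := (stab_eq hv (s := 1) (t := 0)
          (by rw [ha, mul_zero])
          (by rw [Real.exp_zero, one_mul])
          (by rw [h2, mul_zero])).1
        exact one_ne_zero h
      have hA : α ≠ 0 := by
        intro hA0
        have h := (stab_eq hv (s := 1) (t := 0)
          (by rw [ha, mul_zero])
          (by rw [Real.exp_zero, one_mul])
          (by rw [show α * 1 + β * 0 = 0 by rw [hA0]; ring, Real.exp_zero, one_mul])).1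
        exact one_ne_zero h
      set t : ℝ := -Real.log |v 1| with ht
      refine ⟨((-(β * t) - Real.log |v 2|) / α, t), Or.inr ⟨⟨?_, ?_, ?_⟩, hA⟩⟩
      · rw [act_apply0, ha, mul_zero]
      · rw [act_apply1]
        exact abs_exp_neg_log hB
      · rw [act_apply2]
        rw [show α * (((-(β * t) - Real.log |v 2|) / α, t) : ℝ × ℝ).1 +
            β * (((-(β * t) - Real.log |v 2|) / α, t) : ℝ × ℝ).2 =
            -Real.log |v 2| from by field_simp; ring]
        exact abs_exp_neg_log hc
    · -- v 0 ≠ 0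
      set s : ℝ := -Real.log |v 0| with hs
      have habs0 : ∀ t : ℝ, |act α β (s, t) v 0| = 1 := by
        intro t
        rw [act_apply0]
        exact abs_exp_neg_log ha
      by_cases hB : v 1 = 0
      · -- plane v₁ = 0 : need v₂ ≠ 0
        have hc : v 2 ≠ 0 := by
          intro h2
          have h := (stab_eq hv (s := 0) (t := 1)
            (by rw [Real.exp_zero, one_mul])
            (by rw [hB, mul_zero])
            (by rw [h2, mul_zero])).2
          exact one_ne_zero h
        refine ⟨(s, (-(α * s) - Real.log |v 2|) / β), Or.inl ⟨habs0 _, ?_, ?_, Or.inr ?_⟩⟩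
        · rw [act_apply1, hB, mul_zero]
          simp
        · rw [act_apply2]
          rw [show α * ((s, (-(α * s) - Real.log |v 2|) / β) : ℝ × ℝ).1 +
              β * ((s, (-(α * s) - Real.log |v 2|) / β) : ℝ × ℝ).2 =
              -Real.log |v 2| from by field_simp; ring]
          exact (abs_exp_neg_log hc).le
        · rw [act_apply2]
          rw [show α * ((s, (-(α * s) - Real.log |v 2|) / β) : ℝ × ℝ).1 +
              β * ((s, (-(α * s) - Real.log |v 2|) / β) : ℝ × ℝ).2 =
              -Real.log |v 2| from by field_simp; ring]
          exact abs_exp_neg_log hc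
      · by_cases hc : v 2 = 0
        · refine ⟨(s, -Real.log |v 1|), Or.inl ⟨habs0 _, ?_, ?_, Or.inl ?_⟩⟩
          · rw [act_apply1]
            exact (abs_exp_neg_log hB).le
          · rw [act_apply2, hc, mul_zero]
            simp
          · rw [act_apply1]
            exact abs_exp_neg_log hB
        · -- generic case
          set u : ℝ := -Real.log |v 1| with hu
          set w : ℝ := (-(α * s) - Real.log |v 2|) / β with hw
          set t : ℝ := min u w with htdef
          have key1 : Real.exp u * |v 1| = 1 := by
            rw [← abs_exp_mul]
            exact abs_exp_neg_log hB
          have key2 : Real.exp (α * s + β * w) * |v 2| = 1 := by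
            rw [show α * s + β * w = -Real.log |v 2| from by rw [hw]; field_simp; ring,
              ← abs_exp_mul]
            exact abs_exp_neg_log hc
          have h1le : |act α β (s, t) v 1| ≤ 1 := by
            rw [act_apply1, abs_exp_mul]
            calc Real.exp t * |v 1| ≤ Real.exp u * |v 1| := by
                  have := Real.exp_le_exp.2 (min_le_left u w)
                  exact mul_le_mul_of_nonneg_right this (abs_nonneg _)
              _ = 1 := key1
          have h2le : |act α β (s, t) v 2| ≤ 1 := by
            rw [act_apply2, abs_exp_mul]
            calc Real.exp (α * s + β * t) * |v 2|
                ≤ Real.exp (α * s + β * w) * |v 2| := by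
                  have htw : β * t ≤ β * w :=
                    mul_le_mul_of_nonneg_left (min_le_right u w) hβ.le
                  exact mul_le_mul_of_nonneg_right
                    (Real.exp_le_exp.2 (by linarith)) (abs_nonneg _)
              _ = 1 := key2
          refine ⟨(s, t), Or.inl ⟨habs0 _, h1le, h2le, ?_⟩⟩
          rcases min_choice u w with hmin | hmin
          · left
            rw [act_apply1, abs_exp_mul]
            rw [show ((s,t) : ℝ × ℝ).2 = u from hmin ▸ htdef]
            exact key1
          · right
            rw [act_apply2, abs_exp_mul]
            rw [show α * ((s,t) : ℝ × ℝ).1 + β * ((s,t) : ℝ × ℝ).2 = α * s + β * w from by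
              rw [htdef, hmin]]
            exact key2

lemma compactSpace_of_saturation (α β : ℝ) {K : Set (Fin 3 → ℝ)} (hK : IsCompact K)
    (hsub : K ⊆ freeSet α β)
    (hsat : ∀ v ∈ freeSet α β, ∃ p : ℝ × ℝ, act α β p v ∈ K) :
    CompactSpace (Quot (orbitRel α β)) := by
  constructor
  have h1 : IsCompact (Subtype.val ⁻¹' K : Set ↥(freeSet α β)) := by
    rw [Topology.IsEmbedding.subtypeVal.isCompact_iff]
    rw [Subtype.image_preimage_coe, inter_eq_self_of_subset_right hsub]
    exact hK
  have h2 : Quot.mk (orbitRel α β) '' (Subtype.val ⁻¹' K) = univ := by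
    ext q
    simp only [mem_univ, iff_true]
    obtain ⟨x, rfl⟩ := Quot.exists_rep q
    obtain ⟨p, hp⟩ := hsat x.1 x.2
    refine ⟨⟨act α β p x.1, hsub hp⟩, hp, ?_⟩
    exact (Quot.sound ⟨p, rfl⟩).symm
  rw [← h2]
  exact h1.image continuous_quot_mk

def gfun (α β : ℝ) (v : Fin 3 → ℝ) : ℝ := v 2 * |v 0| ^ (-α) * |v 1| ^ (-β)

lemma gfun_cont {α β : ℝ} (hα : α ≤ 0) (hβ : β ≤ 0) : Continuous (gfun α β) := by
  have h0 : Continuous fun v : Fin 3 → ℝ => |v 0| ^ (-α) :=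
    (continuous_apply (0 : Fin 3)).abs.rpow_const fun _ => Or.inr (by linarith)
  have h1 : Continuous fun v : Fin 3 → ℝ => |v 1| ^ (-β) :=
    (continuous_apply (1 : Fin 3)).abs.rpow_const fun _ => Or.inr (by linarith)
  exact ((continuous_apply (2 : Fin 3)).mul h0).mul h1

lemma gfun_invariant (α β : ℝ) (p : ℝ × ℝ) (v : Fin 3 → ℝ) :
    gfun α β (act α β p v) = gfun α β v := by
  unfold gfun
  rw [act_apply0, act_apply1, act_apply2]
  rw [abs_mul, abs_mul, Real.abs_exp, Real.abs_exp]
  rw [Real.mul_rpow (Real.exp_pos _).le (abs_nonneg _),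
    Real.mul_rpow (Real.exp_pos _).le (abs_nonneg _)]
  rw [← Real.exp_mul, ← Real.exp_mul]
  have : Real.exp (α * p.1 + β * p.2) * Real.exp (p.1 * -α) * Real.exp (p.2 * -β) = 1 := by
    rw [← Real.exp_add, ← Real.exp_add, show α * p.1 + β * p.2 + p.1 * -α + p.2 * -β = 0
      from by ring, Real.exp_zero]
  calc Real.exp (α * p.1 + β * p.2) * v 2 * (Real.exp (p.1 * -α) * |v 0| ^ (-α)) *
        (Real.exp (p.2 * -β) * |v 1| ^ (-β))
      = (Real.exp (α * p.1 + β * p.2) * Real.exp (p.1 * -α) * Real.exp (p.2 * -β)) *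
        (v 2 * |v 0| ^ (-α) * |v 1| ^ (-β)) := by ring
    _ = v 2 * |v 0| ^ (-α) * |v 1| ^ (-β) := by rw [this, one_mul]

lemma gfun_val (α β c : ℝ) : gfun α β ![1, 1, c] = c := by
  unfold gfun
  norm_num
  rfl

lemma volume_coord_zero (i : Fin 3) : volume {v : Fin 3 → ℝ | v i = 0} = 0 := by
  have h : {v : Fin 3 → ℝ | v i = 0} =
      Set.pi univ (fun j => if j = i then ({0} : Set ℝ) else univ) := by
    ext v
    simp only [mem_setOf_eq, mem_pi, mem_univ, true_implies]
    constructor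
    · intro h j
      by_cases hj : j = i <;> simp [hj, h]
    · intro h
      have := h i
      simpa using this
  rw [h, volume_pi_pi]
  apply Finset.prod_eq_zero (Finset.mem_univ i)
  simp

lemma volume_freeSet_compl (α β : ℝ) : volume (freeSet α β)ᶜ = 0 := by
  have hsub : (freeSet α β)ᶜ ⊆ {v : Fin 3 → ℝ | v 0 = 0} ∪ {v : Fin 3 → ℝ | v 1 = 0} := by
    intro v hv
    by_contra h
    simp only [mem_union, mem_setOf_eq, not_or] at h
    exact hv (free_of_01 h.1 h.2)
  exact measure_mono_null hsub
    (measure_union_null (volume_coord_zero 0) (volume_coord_zero 1))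

lemma no_compact_conull (α β : ℝ) (hα : α ≤ 0) (hβ : β ≤ 0)
    (K : Set (Quot (orbitRel α β))) (hK : IsCompact K)
    (hnull : volume {v : Fin 3 → ℝ |
      ∃ hv : v ∈ freeSet α β, Quot.mk (orbitRel α β) ⟨v, hv⟩ ∈ K}ᶜ = 0) : False := by
  set G : Quot (orbitRel α β) → ℝ :=
    Quot.lift (fun x : ↥(freeSet α β) => gfun α β x.1)
      (by rintro x y ⟨p, hp⟩; show gfun α β x.1 = gfun α β y.1; rw [← hp, gfun_invariant]) with hG
  have hGc : Continuous G :=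
    continuous_quot_lift _ ((gfun_cont hα hβ).comp continuous_subtype_val)
  obtain ⟨M, hM⟩ := (hK.image hGc).isBounded.subset_closedBall 0
  set U : Set (Fin 3 → ℝ) := {v | M < gfun α β v} with hU
  have hUopen : IsOpen U := isOpen_lt continuous_const (gfun_cont hα hβ)
  have hUne : U.Nonempty := by
    refine ⟨![1, 1, M + 1], ?_⟩
    simp only [hU, mem_setOf_eq, gfun_val]
    linarith
  have hsub : U ⊆ {v : Fin 3 → ℝ |
      ∃ hv : v ∈ freeSet α β, Quot.mk (orbitRel α β) ⟨v, hv⟩ ∈ K}ᶜ := by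
    intro v hvU hvP
    obtain ⟨hv, hvK⟩ := hvP
    have hmem : G (Quot.mk (orbitRel α β) ⟨v, hv⟩) ∈ G '' K := ⟨_, hvK, rfl⟩
    have hle := hM hmem
    rw [Metric.mem_closedBall, Real.dist_eq, sub_zero] at hle
    have hgle : gfun α β v ≤ M := (abs_le.mp hle).2
    exact absurd hvU (not_lt.mpr hgle)
  exact (hUopen.measure_pos volume hUne).ne' (measure_mono_null hsub hnull)

/-- For `H = {diag(e^s, e^t, e^{αs+βt})}` with `(α,β) ≠ (0,0)`, the
following are equivalent: (i) `𝒪₂/H` is compact; (ii) `𝒪₂/H` contains a compact open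
subset with conull preimage in `ℝ³`; (iii) `0 < α` or `0 < β`. -/
theorem compact_orbitSpace_iff_pos
    (α β : ℝ) (hαβ : (α, β) ≠ (0, 0)) :
    (CompactSpace (Quot (orbitRel α β)) ↔ (0 < α ∨ 0 < β)) ∧
    ((∃ K : Set (Quot (orbitRel α β)), IsCompact K ∧ IsOpen K ∧
        volume {v : Fin 3 → ℝ |
          ∃ hv : v ∈ freeSet α β, Quot.mk (orbitRel α β) ⟨v, hv⟩ ∈ K}ᶜ = 0) ↔
      (0 < α ∨ 0 < β)) := by
  have hP : {v : Fin 3 → ℝ |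
      ∃ hv : v ∈ freeSet α β, Quot.mk (orbitRel α β) ⟨v, hv⟩ ∈ (univ : Set _)} =
      freeSet α β := by
    ext v
    simp
  have hcs : (0 < α ∨ 0 < β) → CompactSpace (Quot (orbitRel α β)) := by
    rintro (hα | hβ)
    · obtain ⟨K, h1, h2, h3⟩ := exists_compact_saturation_alpha α β hα
      exact compactSpace_of_saturation α β h1 h2 h3
    · obtain ⟨K, h1, h2, h3⟩ := exists_compact_saturation_beta α β hβ
      exact compactSpace_of_saturation α β h1 h2 h3
  have hii : CompactSpace (Quot (orbitRel α β)) →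
      (∃ K : Set (Quot (orbitRel α β)), IsCompact K ∧ IsOpen K ∧
        volume {v : Fin 3 → ℝ |
          ∃ hv : v ∈ freeSet α β, Quot.mk (orbitRel α β) ⟨v, hv⟩ ∈ K}ᶜ = 0) := by
    intro hc
    refine ⟨univ, @isCompact_univ _ _ hc, isOpen_univ, ?_⟩
    rw [hP]
    exact volume_freeSet_compl α β
  have hnc : (∃ K : Set (Quot (orbitRel α β)), IsCompact K ∧ IsOpen K ∧
        volume {v : Fin 3 → ℝ |
          ∃ hv : v ∈ freeSet α β, Quot.mk (orbitRel α β) ⟨v, hv⟩ ∈ K}ᶜ = 0) →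
      (0 < α ∨ 0 < β) := by
    rintro ⟨K, hK, -, hnull⟩
    by_contra h
    push_neg at h
    exact no_compact_conull α β h.1 h.2 K hK hnull
  exact ⟨⟨fun hc => hnc (hii hc), hcs⟩, ⟨hnc, fun h => hii (hcs h)⟩⟩
end
end

section
/- Let α, β ∈ ℝ with αβ ≠ 0 and at least one of α, β strictly positive, and let H = {diag(e^s, e^t, e^{αs+βt}) : s,t ∈ ℝ} act on ℝ³. Let 𝒪₂ = {v ∈ ℝ³ : at least two of the coordinates v₁, v₂, v₃ are nonzero}. Then there exists no topological quasi-section for the H-action on 𝒪₂; in particular, there exists no topological section for 𝒪₂. -/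
open Set Topology
open scoped Real

noncomputable section

/-- `𝒪₂ = {v ∈ ℝ³ : at least two coordinates of v are nonzero}`. -/
def O2 : Set (Fin 3 → ℝ) :=
  {v | (v 0 ≠ 0 ∧ v 1 ≠ 0) ∨ (v 0 ≠ 0 ∧ v 2 ≠ 0) ∨ (v 1 ≠ 0 ∧ v 2 ≠ 0)}

/-- `C` is a topological quasi-section for the `H`-invariant set `U`: `C` is open,
`HC = U`, and `((C,C)) = {h ∈ H : hC ∩ C ≠ ∅}` is relatively compact (identifying
`H ≅ ℝ²` via `(s,t) ↦ diag(e^s, e^t, e^{αs+βt})`). -/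
def IsQuasiSection (α β : ℝ) (U C : Set (Fin 3 → ℝ)) : Prop :=
  IsOpen C ∧ C ⊆ U ∧ {v | ∃ p : ℝ × ℝ, ∃ c ∈ C, act α β p c = v} = U ∧
    IsCompact (closure {p : ℝ × ℝ | ∃ c ∈ C, act α β p c ∈ C})

/-- `C` is a topological section for the `H`-invariant set `U`: the map
`H × C → U, (h,c) ↦ hc` is a homeomorphism. -/
def IsTopSection (α β : ℝ) (U C : Set (Fin 3 → ℝ)) : Prop :=
  C ⊆ U ∧ ∃ e : ((ℝ × ℝ) × ↥C) ≃ₜ ↥U,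
    ∀ (p : ℝ × ℝ) (c : ↥C), ((e (p, c) : ↥U) : Fin 3 → ℝ) = act α β p (c : Fin 3 → ℝ)

section Aux
open Filter

lemma act_act (α β : ℝ) (p q : ℝ × ℝ) (v : Fin 3 → ℝ) :
    act α β p (act α β q v) = act α β (p + q) v := by
  funext i
  fin_cases i
  · show Real.exp p.1 * (Real.exp q.1 * v 0) = Real.exp (p + q).1 * v 0
    rw [Prod.fst_add, Real.exp_add]; ring
  · show Real.exp p.2 * (Real.exp q.2 * v 1) = Real.exp (p + q).2 * v 1
    rw [Prod.snd_add, Real.exp_add]; ring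
  · show Real.exp (α * p.1 + β * p.2) * (Real.exp (α * q.1 + β * q.2) * v 2)
      = Real.exp (α * (p + q).1 + β * (p + q).2) * v 2
    rw [Prod.fst_add, Prod.snd_add, show α * (p.1 + q.1) + β * (p.2 + q.2)
        = (α * p.1 + β * p.2) + (α * q.1 + β * q.2) by ring,
      Real.exp_add (α * p.1 + β * p.2) (α * q.1 + β * q.2)]
    ring

lemma act_zero (α β : ℝ) (v : Fin 3 → ℝ) : act α β 0 v = v := by
  funext i
  fin_cases i
  · show Real.exp (0:ℝ×ℝ).1 * v 0 = v 0; simp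
  · show Real.exp (0:ℝ×ℝ).2 * v 1 = v 1; simp
  · show Real.exp (α * (0:ℝ×ℝ).1 + β * (0:ℝ×ℝ).2) * v 2 = v 2; simp

lemma act_neg_act (α β : ℝ) (p : ℝ × ℝ) (v : Fin 3 → ℝ) :
    act α β (-p) (act α β p v) = v := by
  rw [act_act, neg_add_cancel, act_zero]

lemma tendsto_act (α β : ℝ) (p : ℝ × ℝ) {w : ℕ → Fin 3 → ℝ} {v : Fin 3 → ℝ}
    (hw : Filter.Tendsto w atTop (𝓝 v)) :
    Filter.Tendsto (fun n => act α β p (w n)) atTop (𝓝 (act α β p v)) := by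
  rw [tendsto_pi_nhds] at hw ⊢
  intro i
  fin_cases i
  · simpa [act] using (hw 0).const_mul (Real.exp p.1)
  · simpa [act] using (hw 1).const_mul (Real.exp p.2)
  · simpa [act] using (hw 2).const_mul (Real.exp (α * p.1 + β * p.2))

lemma quasi_contra (α β : ℝ) (C : Set (Fin 3 → ℝ)) (h : IsQuasiSection α β O2 C)
    (v v' : Fin 3 → ℝ) (hv : v ∈ O2) (hv' : v' ∈ O2)
    (w : ℕ → Fin 3 → ℝ) (q : ℕ → ℝ × ℝ)
    (hw : Filter.Tendsto w atTop (𝓝 v))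
    (hqw : Filter.Tendsto (fun n => act α β (q n) (w n)) atTop (𝓝 v'))
    (hq : Filter.Tendsto (fun n => ‖q n‖) atTop atTop) : False := by
  obtain ⟨hCopen, _, hHC, hcomp⟩ := h
  rw [← hHC] at hv hv'
  obtain ⟨r, c, hcC, hrc⟩ := hv
  obtain ⟨r', c', hc'C, hr'c⟩ := hv'
  set a := -r with ha
  set a' := -r' with ha'
  have haC : act α β a v ∈ C := by
    rw [← hrc, ha, act_neg_act]; exact hcC
  have ha'C : act α β a' v' ∈ C := by
    rw [← hr'c, ha', act_neg_act]; exact hc'C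
  have h1 : ∀ᶠ n in atTop, act α β a (w n) ∈ C :=
    (tendsto_act α β a hw).eventually_mem (hCopen.mem_nhds haC)
  have h2 : ∀ᶠ n in atTop, act α β a' (act α β (q n) (w n)) ∈ C :=
    (tendsto_act α β a' hqw).eventually_mem (hCopen.mem_nhds ha'C)
  have hbd := hcomp.isBounded
  obtain ⟨R, hR⟩ := isBounded_iff_forall_norm_le.1 hbd
  have h3 : ∀ᶠ n in atTop, (R + ‖a'‖ + ‖a‖ : ℝ) < ‖q n‖ :=
    hq.eventually_gt_atTop _
  obtain ⟨n, hn1, hn2, hn3⟩ := (h1.and (h2.and h3)).exists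
  have hmem : ((a' + q n) + -a) ∈
      {p : ℝ × ℝ | ∃ c ∈ C, act α β p c ∈ C} := by
    refine ⟨act α β a (w n), hn1, ?_⟩
    rw [act_act, show ((a' + q n) + -a) + a = a' + q n by abel, ← act_act]
    exact hn2
  have hle : ‖(a' + q n) + -a‖ ≤ R := hR _ (subset_closure hmem)
  have : ‖q n‖ ≤ ‖(a' + q n) + -a‖ + ‖a'‖ + ‖a‖ := by
    have : q n = ((a' + q n) + -a) + -a' + a := by abel
    calc ‖q n‖ = ‖((a' + q n) + -a) + -a' + a‖ := by rw [← this]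
    _ ≤ ‖((a' + q n) + -a) + -a'‖ + ‖a‖ := norm_add_le _ _
    _ ≤ ‖(a' + q n) + -a‖ + ‖-a'‖ + ‖a‖ := by
        gcongr; exact norm_add_le _ _
    _ = ‖(a' + q n) + -a‖ + ‖a'‖ + ‖a‖ := by rw [norm_neg]
  linarith

lemma sect_contra (α β : ℝ) (C : Set (Fin 3 → ℝ)) (h : IsTopSection α β O2 C)
    (v v' : Fin 3 → ℝ) (hv : v ∈ O2) (hv' : v' ∈ O2)
    (w : ℕ → Fin 3 → ℝ) (q : ℕ → ℝ × ℝ)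
    (hwO : ∀ n, w n ∈ O2) (hwO' : ∀ n, act α β (q n) (w n) ∈ O2)
    (hw : Filter.Tendsto w atTop (𝓝 v))
    (hqw : Filter.Tendsto (fun n => act α β (q n) (w n)) atTop (𝓝 v'))
    (hq : Filter.Tendsto (fun n => ‖q n‖) atTop atTop) : False := by
  obtain ⟨_, e, he⟩ := h
  set W : ℕ → ↥O2 := fun n => ⟨w n, hwO n⟩ with hW
  set W' : ℕ → ↥O2 := fun n => ⟨act α β (q n) (w n), hwO' n⟩ with hW'
  have hval : ∀ u : ↥O2,
      act α β (e.symm u).1 ((e.symm u).2 : Fin 3 → ℝ) = (u : Fin 3 → ℝ) := by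
    intro u
    rw [← he]
    congr 1
    rw [Prod.mk.eta, e.apply_symm_apply]
  have key : ∀ n, e.symm (W' n) = (q n + (e.symm (W n)).1, (e.symm (W n)).2) := by
    intro n
    have : e ((q n + (e.symm (W n)).1, (e.symm (W n)).2)) = W' n := by
      apply Subtype.ext
      rw [he]
      show act α β _ _ = act α β (q n) (w n)
      rw [← act_act, hval (W n)]
    rw [← this, e.symm_apply_apply]
  set P : ↥O2 → ℝ × ℝ := fun u => (e.symm u).1 with hP
  have hPc : Continuous P := continuous_fst.comp e.symm.continuous
  have hWt : Filter.Tendsto W atTop (𝓝 ⟨v, hv⟩) := by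
    rw [tendsto_subtype_rng]; exact hw
  have hW't : Filter.Tendsto W' atTop (𝓝 ⟨v', hv'⟩) := by
    rw [tendsto_subtype_rng]; exact hqw
  have h1 : Filter.Tendsto (fun n => P (W n)) atTop (𝓝 (P ⟨v, hv⟩)) :=
    (hPc.tendsto _).comp hWt
  have h2 : Filter.Tendsto (fun n => P (W' n)) atTop (𝓝 (P ⟨v', hv'⟩)) :=
    (hPc.tendsto _).comp hW't
  have h3 : Filter.Tendsto q atTop (𝓝 (P ⟨v', hv'⟩ - P ⟨v, hv⟩)) := by
    have := h2.sub h1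
    refine this.congr (fun n => ?_)
    show P (W' n) - P (W n) = q n
    rw [hP]
    simp only [key n]
    abel
  exact not_tendsto_atTop_of_tendsto_nhds h3.norm hq

lemma tendsto_exp_neg_nat : Filter.Tendsto (fun n : ℕ => Real.exp (-(n:ℝ))) atTop (𝓝 0) :=
  Real.tendsto_exp_atBot.comp (tendsto_neg_atTop_atBot.comp tendsto_natCast_atTop_atTop)

lemma tendsto_exp_const_mul_nat {c : ℝ} (hc : c < 0) :
    Filter.Tendsto (fun n : ℕ => Real.exp (c * (n:ℝ))) atTop (𝓝 0) :=
  Real.tendsto_exp_atBot.comp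
    ((tendsto_const_mul_atBot_of_neg hc).2 tendsto_natCast_atTop_atTop)

lemma tendsto_norm_snd {f : ℕ → ℝ} :
    Filter.Tendsto (fun n : ℕ => ‖((f n, (n:ℝ)) : ℝ × ℝ)‖) atTop atTop := by
  refine tendsto_atTop_mono (fun n => ?_) tendsto_natCast_atTop_atTop
  calc (n:ℝ) ≤ ‖((n:ℝ))‖ := by rw [Real.norm_eq_abs]; exact le_abs_self _
  _ ≤ ‖((f n, (n:ℝ)) : ℝ × ℝ)‖ := norm_snd_le ((f n, (n:ℝ)) : ℝ × ℝ)

lemma tendsto_norm_fst {f : ℕ → ℝ} :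
    Filter.Tendsto (fun n : ℕ => ‖(((n:ℝ), f n) : ℝ × ℝ)‖) atTop atTop := by
  refine tendsto_atTop_mono (fun n => ?_) tendsto_natCast_atTop_atTop
  calc (n:ℝ) ≤ ‖((n:ℝ))‖ := by rw [Real.norm_eq_abs]; exact le_abs_self _
  _ ≤ ‖(((n:ℝ), f n) : ℝ × ℝ)‖ := norm_fst_le (((n:ℝ), f n) : ℝ × ℝ)

lemma exists_data (α β : ℝ) (hαβ : α * β ≠ 0) (hpos : 0 < α ∨ 0 < β) :
    ∃ (v v' : Fin 3 → ℝ) (w : ℕ → Fin 3 → ℝ) (q : ℕ → ℝ × ℝ),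
      v ∈ O2 ∧ v' ∈ O2 ∧ (∀ n, w n ∈ O2) ∧ (∀ n, act α β (q n) (w n) ∈ O2) ∧
      Filter.Tendsto w atTop (𝓝 v) ∧
      Filter.Tendsto (fun n => act α β (q n) (w n)) atTop (𝓝 v') ∧
      Filter.Tendsto (fun n => ‖q n‖) atTop atTop := by
  have hα : α ≠ 0 := left_ne_zero_of_mul hαβ
  have hβ : β ≠ 0 := right_ne_zero_of_mul hαβ
  have hq2 : ∀ n : ℕ, Real.exp ((n:ℝ)) * Real.exp (-(n:ℝ)) = 1 := by
    intro n; rw [← Real.exp_add]; simp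
  rcases hβ.lt_or_gt with hβneg | hβpos
  · -- β < 0, hence α > 0
    have hαpos : 0 < α := hpos.resolve_right (fun h => absurd hβneg (not_lt.2 h.le))
    refine ⟨![1, 0, 1], ![1, 1, 0], fun n => ![1, Real.exp (-(n:ℝ)), 1],
      fun n => (0, (n:ℝ)), ?_, ?_, ?_, ?_, ?_, ?_, ?_⟩
    · exact Or.inr (Or.inl ⟨one_ne_zero, one_ne_zero⟩)
    · exact Or.inl ⟨one_ne_zero, one_ne_zero⟩
    · exact fun n => Or.inr (Or.inl ⟨one_ne_zero, one_ne_zero⟩)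
    · intro n
      refine Or.inl ⟨?_, ?_⟩
      · show Real.exp (0:ℝ) * 1 ≠ 0
        positivity
      · show Real.exp ((n:ℝ)) * Real.exp (-(n:ℝ)) ≠ 0
        positivity
    · rw [tendsto_pi_nhds]
      intro i
      fin_cases i
      · exact tendsto_const_nhds
      · exact tendsto_exp_neg_nat
      · exact tendsto_const_nhds
    · rw [tendsto_pi_nhds]
      intro i
      fin_cases i
      · show Filter.Tendsto (fun n : ℕ => Real.exp (0:ℝ) * 1) atTop (𝓝 1)
        simp only [Real.exp_zero, mul_one]
        exact tendsto_const_nhds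
      · show Filter.Tendsto (fun n : ℕ => Real.exp ((n:ℝ)) * Real.exp (-(n:ℝ))) atTop (𝓝 1)
        simp only [hq2]
        exact tendsto_const_nhds
      · show Filter.Tendsto (fun n : ℕ => Real.exp (α * 0 + β * (n:ℝ)) * 1) atTop (𝓝 0)
        simp only [mul_zero, zero_add, mul_one]
        exact tendsto_exp_const_mul_nat hβneg
    · exact tendsto_norm_snd
  · rcases hα.lt_or_gt with hαneg | hαpos
    · -- α < 0, β > 0
      refine ⟨![0, 1, 1], ![1, 1, 0], fun n => ![Real.exp (-(n:ℝ)), 1, 1],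
        fun n => ((n:ℝ), 0), ?_, ?_, ?_, ?_, ?_, ?_, ?_⟩
      · exact Or.inr (Or.inr ⟨one_ne_zero, one_ne_zero⟩)
      · exact Or.inl ⟨one_ne_zero, one_ne_zero⟩
      · exact fun n => Or.inr (Or.inr ⟨one_ne_zero, one_ne_zero⟩)
      · intro n
        refine Or.inl ⟨?_, ?_⟩
        · show Real.exp ((n:ℝ)) * Real.exp (-(n:ℝ)) ≠ 0
          positivity
        · show Real.exp (0:ℝ) * 1 ≠ 0
          positivity
      · rw [tendsto_pi_nhds]
        intro i
        fin_cases i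
        · exact tendsto_exp_neg_nat
        · exact tendsto_const_nhds
        · exact tendsto_const_nhds
      · rw [tendsto_pi_nhds]
        intro i
        fin_cases i
        · show Filter.Tendsto (fun n : ℕ => Real.exp ((n:ℝ)) * Real.exp (-(n:ℝ))) atTop (𝓝 1)
          simp only [hq2]
          exact tendsto_const_nhds
        · show Filter.Tendsto (fun n : ℕ => Real.exp (0:ℝ) * 1) atTop (𝓝 1)
          simp only [Real.exp_zero, mul_one]
          exact tendsto_const_nhds
        · show Filter.Tendsto (fun n : ℕ => Real.exp (α * (n:ℝ) + β * 0) * 1) atTop (𝓝 0)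
          simp only [mul_zero, add_zero, mul_one]
          exact tendsto_exp_const_mul_nat hαneg
      · exact tendsto_norm_fst
    · -- α > 0, β > 0
      have hc : -β / α < 0 := div_neg_of_neg_of_pos (neg_neg_iff_pos.2 hβpos) hαpos
      refine ⟨![1, 0, 1], ![0, 1, 1], fun n => ![1, Real.exp (-(n:ℝ)), 1],
        fun n => ((-β / α) * (n:ℝ), (n:ℝ)), ?_, ?_, ?_, ?_, ?_, ?_, ?_⟩
      · exact Or.inr (Or.inl ⟨one_ne_zero, one_ne_zero⟩)
      · exact Or.inr (Or.inr ⟨one_ne_zero, one_ne_zero⟩)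
      · exact fun n => Or.inr (Or.inl ⟨one_ne_zero, one_ne_zero⟩)
      · intro n
        refine Or.inl ⟨?_, ?_⟩
        · show Real.exp ((-β / α) * (n:ℝ)) * 1 ≠ 0
          positivity
        · show Real.exp ((n:ℝ)) * Real.exp (-(n:ℝ)) ≠ 0
          positivity
      · rw [tendsto_pi_nhds]
        intro i
        fin_cases i
        · exact tendsto_const_nhds
        · exact tendsto_exp_neg_nat
        · exact tendsto_const_nhds
      · rw [tendsto_pi_nhds]
        intro i
        fin_cases i
        · show Filter.Tendsto (fun n : ℕ => Real.exp ((-β / α) * (n:ℝ)) * 1) atTop (𝓝 0)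
          simp only [mul_one]
          exact tendsto_exp_const_mul_nat hc
        · show Filter.Tendsto (fun n : ℕ => Real.exp ((n:ℝ)) * Real.exp (-(n:ℝ))) atTop (𝓝 1)
          simp only [hq2]
          exact tendsto_const_nhds
        · show Filter.Tendsto
            (fun n : ℕ => Real.exp (α * ((-β / α) * (n:ℝ)) + β * (n:ℝ)) * 1) atTop (𝓝 1)
          have : ∀ n : ℕ, α * ((-β / α) * (n:ℝ)) + β * (n:ℝ) = 0 := by
            intro n; field_simp; ring
          simp only [this, Real.exp_zero, mul_one]
          exact tendsto_const_nhds
      · exact tendsto_norm_snd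

end Aux

/-- For `H = {diag(e^s, e^t, e^{αs+βt})}` with `αβ ≠ 0` and at least
one of `α, β` positive, there is no topological quasi-section for the action of `H` on
`𝒪₂`; in particular there is no topological section. -/
theorem no_quasiSection_case_b
    (α β : ℝ) (hαβ : α * β ≠ 0) (hpos : 0 < α ∨ 0 < β) :
    (¬ ∃ C : Set (Fin 3 → ℝ), IsQuasiSection α β O2 C) ∧
    (¬ ∃ C : Set (Fin 3 → ℝ), IsTopSection α β O2 C) := by
  obtain ⟨v, v', w, q, hv, hv', hwO, hwO', hw, hqw, hq⟩ := exists_data α β hαβ hpos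
  constructor
  · rintro ⟨C, hC⟩
    exact quasi_contra α β C hC v v' hv hv' w q hw hqw hq
  · rintro ⟨C, hC⟩
    exact sect_contra α β C hC v v' hv hv' w q hwO hwO' hw hqw hq
end
end
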